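/- Let X be the constructed set. The number of Tverberg partitions of X into r parts (counted up to relabeling of the parts, equivalently as unordered partitions) is exactly ((r−1)!)^d. -/
import Mathlib


open Finset Set

/-- The standard basis vector `e^j` of `ℝ^d`. -/
noncomputable def stdVec (d : ℕ) (j : Fin d) : Fin d → ℝ := Pi.single j 1

/-- The set `A_j = {e^j, 2e^j, ..., (r-1)e^j}`. -/
def Aset (d r : ℕ) (j : Fin d) : Set (Fin d → ℝ) :=
  {v | ∃ k : ℕ, 1 ≤ k ∧ k ≤ r - 1 ∧ v = (k : ℝ) • stdVec d j}

/-- The point `x^i`, with `x^i_j = 0` if `i = i(j)` and `x^i_j = -i` otherwise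
(indices taken in `{1,...,r}`, so `Fin r` index `i` corresponds to `i+1`). -/
def xpt (d r : ℕ) (ι : Fin d → Fin r) (i : Fin r) : Fin d → ℝ :=
  fun j => if ι j = i then 0 else -((i : ℕ) + 1 : ℝ)

/-- The set `A = {x^1, ..., x^r}`. -/
def Apts (d r : ℕ) (ι : Fin d → Fin r) : Set (Fin d → ℝ) := Set.range (xpt d r ι)

/-- The constructed set `X = A ∪ A_1 ∪ ⋯ ∪ A_d`. -/
def Xset (d r : ℕ) (ι : Fin d → Fin r) : Set (Fin d → ℝ) :=
  Apts d r ι ∪ ⋃ j, Aset d r j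

/-- `P : Fin r → Set (Fin d → ℝ)` is a Tverberg partition of `X`:
a partition of `X` into pairwise disjoint parts whose convex hulls share a point. -/
def IsTverbergPartition (d r : ℕ) (X : Set (Fin d → ℝ))
    (P : Fin r → Set (Fin d → ℝ)) : Prop :=
  (⋃ i, P i) = X ∧ (∀ i i', i ≠ i' → Disjoint (P i) (P i')) ∧
    ∃ p : Fin d → ℝ, ∀ i, p ∈ convexHull ℝ (P i)

namespace TvbAux

variable {d r : ℕ} {ι : Fin d → Fin r}

noncomputable def axPt (d r : ℕ) (j : Fin d) (k : Fin (r-1)) : Fin d → ℝ :=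
  (((k : ℕ) + 1 : ℝ)) • stdVec d j

lemma axPt_apply (j : Fin d) (k : Fin (r-1)) (j' : Fin d) :
    axPt d r j k j' = if j' = j then ((k : ℕ) + 1 : ℝ) else 0 := by
  simp [axPt, stdVec, Pi.single_apply, mul_ite]

lemma axPt_apply_self (j : Fin d) (k : Fin (r-1)) :
    axPt d r j k j = ((k : ℕ) + 1 : ℝ) := by simp [axPt_apply]

lemma axPt_apply_ne (j : Fin d) (k : Fin (r-1)) {j' : Fin d} (h : j' ≠ j) :
    axPt d r j k j' = 0 := by simp [axPt_apply, h]

lemma xpt_apply (i : Fin r) (j : Fin d) :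
    xpt d r ι i j = if ι j = i then 0 else -((i : ℕ) + 1 : ℝ) := rfl

lemma xpt_nonpos (i : Fin r) (j : Fin d) : xpt d r ι i j ≤ 0 := by
  rw [xpt_apply]
  have : (0:ℝ) ≤ ((i : ℕ) : ℝ) + 1 := by positivity
  split <;> linarith

lemma axPt_inj {j j' : Fin d} {k k' : Fin (r-1)}
    (h : axPt d r j k = axPt d r j' k') : j = j' ∧ k = k' := by
  by_cases hj : j = j'
  · subst hj
    refine ⟨rfl, ?_⟩
    have := congrFun h j
    rw [axPt_apply_self, axPt_apply_self] at this
    have h2 : ((k : ℕ) : ℝ) = ((k' : ℕ) : ℝ) := by linarith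
    exact Fin.ext (by exact_mod_cast h2)
  · exfalso
    have := congrFun h j
    rw [axPt_apply_self, axPt_apply_ne _ _ hj] at this
    have : ((k : ℕ) + 1 : ℝ) > 0 := by positivity
    linarith [this]

lemma axPt_ne_xpt (j : Fin d) (k : Fin (r-1)) (i : Fin r) :
    axPt d r j k ≠ xpt d r ι i := by
  intro h
  have := congrFun h j
  rw [axPt_apply_self] at this
  have h2 := xpt_nonpos (ι := ι) i j
  rw [← this] at h2
  have : ((k : ℕ) + 1 : ℝ) > 0 := by positivity
  linarith

lemma xpt_injective (hd : 1 ≤ d) : Function.Injective (xpt d r ι) := by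
  intro i i' h
  by_contra hne
  -- no j with ι j = i
  have h1 : ∀ j, ι j ≠ i := by
    intro j hj
    have hji' : ι j ≠ i' := fun he => hne (hj.symm.trans he)
    have hc := congrFun h j
    rw [xpt_apply, xpt_apply, if_pos hj, if_neg hji'] at hc
    have : ((i' : ℕ) + 1 : ℝ) > 0 := by positivity
    linarith
  have h2 : ∀ j, ι j ≠ i' := by
    intro j hj
    have hji : ι j ≠ i := fun he => hne (he.symm.trans hj)
    have hc := congrFun h j
    rw [xpt_apply, xpt_apply, if_neg hji, if_pos hj] at hc
    have : ((i : ℕ) + 1 : ℝ) > 0 := by positivity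
    linarith
  obtain ⟨j⟩ : Nonempty (Fin d) := ⟨⟨0, hd⟩⟩
  have := congrFun h j
  rw [xpt_apply, xpt_apply, if_neg (h1 j), if_neg (h2 j)] at this
  have : (i : ℕ) = (i' : ℕ) := by exact_mod_cast (by linarith : ((i:ℕ):ℝ) = ((i':ℕ):ℝ))
  exact hne (Fin.ext this)

lemma mem_Xset_iff {v : Fin d → ℝ} :
    v ∈ Xset d r ι ↔ (∃ i, v = xpt d r ι i) ∨ ∃ j k, v = axPt d r j k := by
  constructor
  · rintro (⟨i, rfl⟩ | hv)
    · exact Or.inl ⟨i, rfl⟩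
    · simp only [Set.mem_iUnion] at hv
      obtain ⟨j, k, hk1, hk2, rfl⟩ := hv
      refine Or.inr ⟨j, ⟨k - 1, by omega⟩, ?_⟩
      have hk : (k - 1 : ℕ) + 1 = k := by omega
      simp only [axPt]
      congr 1
      exact_mod_cast hk.symm
  · rintro (⟨i, rfl⟩ | ⟨j, k, rfl⟩)
    · exact Or.inl ⟨i, rfl⟩
    · refine Or.inr (Set.mem_iUnion.2 ⟨j, ⟨(k : ℕ) + 1, by omega, by omega, ?_⟩⟩)
      simp [axPt]


abbrev Gtype (d r : ℕ) (ι : Fin d → Fin r) := (j : Fin d) → (Fin (r-1) ≃ {i : Fin r // i ≠ ι j})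

def part (g : Gtype d r ι) (i : Fin r) : Set (Fin d → ℝ) :=
  insert (xpt d r ι i) {v | ∃ j k, ((g j k : {i' : Fin r // i' ≠ ι j}) : Fin r) = i ∧ v = axPt d r j k}

lemma mem_part_iff {g : Gtype d r ι} {i : Fin r} {v : Fin d → ℝ} :
    v ∈ part g i ↔ v = xpt d r ι i ∨ ∃ j k, ((g j k : {i' : Fin r // i' ≠ ι j}) : Fin r) = i ∧ v = axPt d r j k := by
  simp [part, Set.mem_insert_iff]

lemma xpt_mem_part (g : Gtype d r ι) (i : Fin r) : xpt d r ι i ∈ part g i :=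
  Set.mem_insert _ _

lemma axPt_mem_part_iff {g : Gtype d r ι} {i : Fin r} {j : Fin d} {k : Fin (r-1)} :
    axPt d r j k ∈ part g i ↔ ((g j k : {i' : Fin r // i' ≠ ι j}) : Fin r) = i := by
  rw [mem_part_iff]
  constructor
  · rintro (h | ⟨j', k', hi, he⟩)
    · exact absurd h (axPt_ne_xpt j k i)
    · obtain ⟨rfl, rfl⟩ := axPt_inj he
      exact hi
  · intro h; exact Or.inr ⟨j, k, h, rfl⟩

lemma xpt_mem_part_iff (hd : 1 ≤ d) {g : Gtype d r ι} {i i' : Fin r} :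
    xpt d r ι i' ∈ part g i ↔ i' = i := by
  rw [mem_part_iff]
  constructor
  · rintro (h | ⟨j, k, hi, he⟩)
    · exact xpt_injective hd h
    · exact absurd he.symm (axPt_ne_xpt j k i')
  · rintro rfl; exact Or.inl rfl

lemma part_subset_Xset (g : Gtype d r ι) (i : Fin r) : part g i ⊆ Xset d r ι := by
  intro v hv
  rw [mem_part_iff] at hv
  rw [mem_Xset_iff]
  rcases hv with rfl | ⟨j, k, _, rfl⟩
  · exact Or.inl ⟨i, rfl⟩
  · exact Or.inr ⟨j, k, rfl⟩

lemma part_disjoint (hd : 1 ≤ d) (g : Gtype d r ι) {i i' : Fin r} (h : i ≠ i') :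
    Disjoint (part g i) (part g i') := by
  rw [Set.disjoint_left]
  intro v hv hv'
  rw [mem_part_iff] at hv hv'
  rcases hv with rfl | ⟨j, k, hi, rfl⟩
  · rcases hv' with he | ⟨j, k, hi, he⟩
    · exact h (xpt_injective hd he)
    · exact axPt_ne_xpt j k i he.symm
  · rcases hv' with he | ⟨j', k', hi', he⟩
    · exact axPt_ne_xpt j k i' he
    · obtain ⟨rfl, rfl⟩ := axPt_inj he.symm
      exact h (hi ▸ hi' ▸ rfl)

lemma part_injective (hd : 1 ≤ d) (g : Gtype d r ι) : Function.Injective (part g) := by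
  intro i i' h
  have := xpt_mem_part g i
  rw [h, xpt_mem_part_iff hd] at this
  exact this

lemma sUnion_part (g : Gtype d r ι) : ⋃₀ Set.range (part g) = Xset d r ι := by
  apply Set.Subset.antisymm
  · rintro v ⟨S, ⟨i, rfl⟩, hv⟩
    exact part_subset_Xset g i hv
  · intro v hv
    rw [mem_Xset_iff] at hv
    rcases hv with ⟨i, rfl⟩ | ⟨j, k, rfl⟩
    · exact ⟨part g i, ⟨i, rfl⟩, xpt_mem_part g i⟩
    · exact ⟨part g ((g j k : {i' : Fin r // i' ≠ ι j}) : Fin r), ⟨_, rfl⟩,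
        axPt_mem_part_iff.2 rfl⟩

/-- The common point 0 lies in the convex hull of each part. -/
lemma zero_mem_hull (g : Gtype d r ι) (i : Fin r) :
    (0 : Fin d → ℝ) ∈ convexHull ℝ (part g i) := by
  classical
  -- weights on Option (Fin d)
  set w : Option (Fin d) → ℝ := fun o =>
    match o with
    | none => 1
    | some j => if h : ι j = i then 0
        else ((i : ℕ) + 1 : ℝ) / ((((g j).symm ⟨i, fun he => h he.symm⟩ : Fin (r-1)) : ℕ) + 1)
    with hw
  set z : Option (Fin d) → (Fin d → ℝ) := fun o =>
    match o with
    | none => xpt d r ι i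
    | some j => if h : ι j = i then xpt d r ι i
        else axPt d r j ((g j).symm ⟨i, fun he => h he.symm⟩)
    with hz
  have hw0 : ∀ o ∈ (Finset.univ : Finset (Option (Fin d))), 0 ≤ w o := by
    rintro (_ | j) _
    · norm_num [hw]
    · simp only [hw]
      split
      · exact le_refl 0
      · positivity
  have hwpos : 0 < ∑ o : Option (Fin d), w o := by
    rw [Fintype.sum_option]
    have : 0 ≤ ∑ j : Fin d, w (some j) := Finset.sum_nonneg (fun j _ => hw0 (some j) (Finset.mem_univ _))
    simp only [hw]
    linarith
  have hzm : ∀ o ∈ (Finset.univ : Finset (Option (Fin d))), z o ∈ part g i := by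
    rintro (_ | j) _
    · exact xpt_mem_part g i
    · simp only [hz]
      split
      · exact xpt_mem_part g i
      · rw [axPt_mem_part_iff]
        simp
  have hcm : Finset.univ.centerMass w z = (0 : Fin d → ℝ) := by
    rw [Finset.centerMass]
    have hs : ∑ o : Option (Fin d), w o • z o = (0 : Fin d → ℝ) := by
      funext j0
      rw [Finset.sum_apply]
      rw [Fintype.sum_option]
      have hterm : ∀ j : Fin d, j ≠ j0 → (w (some j) • z (some j)) j0 = 0 := by
        intro j hj
        simp only [hw, hz, Pi.smul_apply, smul_eq_mul]
        split
        · simp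
        · rw [axPt_apply_ne _ _ (Ne.symm hj), mul_zero]
      have hsum : ∑ j : Fin d, (w (some j) • z (some j)) j0 = (w (some j0) • z (some j0)) j0 := by
        apply Finset.sum_eq_single j0
        · intro j _ hj; exact hterm j hj
        · intro h; exact absurd (Finset.mem_univ _) h
      rw [hsum]
      by_cases h : ι j0 = i
      · simp only [hw, hz, Pi.smul_apply, smul_eq_mul, dif_pos h]
        simp [xpt, h]
      · simp only [hw, hz, Pi.smul_apply, smul_eq_mul, dif_neg h]
        rw [axPt_apply_self]
        rw [div_mul_cancel₀]
        · simp only [Pi.zero_apply, one_smul, xpt]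
          rw [if_neg h]
          ring
        · positivity
    rw [hs, smul_zero]
  rw [← hcm]
  exact Finset.centerMass_mem_convexHull _ hw0 hwpos hzm

lemma ncard_range_part (hd : 1 ≤ d) (hr : 1 ≤ r) (g : Gtype d r ι) :
    (Set.range (part g)).ncard = r := by
  rw [← Set.image_univ, Set.ncard_image_of_injective _ (part_injective hd g),
    Set.ncard_univ, Nat.card_eq_fintype_card, Fintype.card_fin]

lemma pairwiseDisjoint_range_part (hd : 1 ≤ d) (g : Gtype d r ι) :
    (Set.range (part g)).PairwiseDisjoint id := by
  rintro S ⟨i, rfl⟩ S' ⟨i', rfl⟩ hne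
  exact part_disjoint hd g (fun h => hne (h ▸ rfl))


lemma Phi_injective (hd : 1 ≤ d) :
    Function.Injective (fun g : Gtype d r ι => Set.range (part g)) := by
  intro g g' h
  simp only at h
  funext j
  apply Equiv.ext
  intro k
  apply Subtype.ext
  set i := ((g j k : {i' : Fin r // i' ≠ ι j}) : Fin r) with hi
  -- part g i ∈ range (part g') ; it contains axPt j k and xpt i
  have h1 : part g i ∈ Set.range (part g') := h ▸ Set.mem_range_self i
  obtain ⟨i'', hi''⟩ := h1
  have h2 : xpt d r ι i ∈ part g' i'' := hi'' ▸ xpt_mem_part g i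
  have h3 : i = i'' := (xpt_mem_part_iff hd).1 h2
  have h4 : axPt d r j k ∈ part g' i'' := by
    rw [hi'']
    exact axPt_mem_part_iff.2 rfl
  have h5 : ((g' j k : {i' : Fin r // i' ≠ ι j}) : Fin r) = i'' := axPt_mem_part_iff.1 h4
  rw [h5, ← h3]

lemma card_Gtype (hr : 1 ≤ r) : Nat.card (Gtype d r ι) = ((r-1).factorial) ^ d := by
  classical
  rw [Nat.card_eq_fintype_card]
  rw [Fintype.card_pi]
  have hcard : ∀ j : Fin d, Fintype.card {i : Fin r // i ≠ ι j} = r - 1 := by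
    intro j
    have := Fintype.card_subtype_compl (fun i : Fin r => i = ι j)
    simp only [Fintype.card_subtype_eq, Fintype.card_fin] at this
    exact this
  have heq : ∀ j : Fin d, Fintype.card (Fin (r-1) ≃ {i : Fin r // i ≠ ι j}) = (r-1).factorial := by
    intro j
    have e : Fin (r-1) ≃ {i : Fin r // i ≠ ι j} :=
      Fintype.equivOfCardEq (by rw [Fintype.card_fin, hcard j])
    rw [Fintype.card_equiv e, Fintype.card_fin]
  simp only [heq]
  rw [Finset.prod_const, Finset.card_univ, Fintype.card_fin]


-- halfspace helpers
lemma hull_le {s : Set (Fin d → ℝ)} {f : (Fin d → ℝ) → ℝ} (hf : IsLinearMap ℝ f)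
    {c : ℝ} (h : ∀ v ∈ s, f v ≤ c) {p : Fin d → ℝ} (hp : p ∈ convexHull ℝ s) : f p ≤ c :=
  convexHull_min h (convex_halfSpace_le hf c) hp

lemma hull_ge {s : Set (Fin d → ℝ)} {f : (Fin d → ℝ) → ℝ} (hf : IsLinearMap ℝ f)
    {c : ℝ} (h : ∀ v ∈ s, c ≤ f v) {p : Fin d → ℝ} (hp : p ∈ convexHull ℝ s) : c ≤ f p :=
  convexHull_min h (convex_halfSpace_ge hf c) hp

lemma hull_lt {s : Set (Fin d → ℝ)} {f : (Fin d → ℝ) → ℝ} (hf : IsLinearMap ℝ f)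
    {c : ℝ} (h : ∀ v ∈ s, f v < c) {p : Fin d → ℝ} (hp : p ∈ convexHull ℝ s) : f p < c :=
  convexHull_min h (convex_halfSpace_lt hf c) hp

lemma eval_linear (j : Fin d) : IsLinearMap ℝ (fun v : Fin d → ℝ => v j) :=
  ⟨fun _ _ => rfl, fun _ _ => rfl⟩

lemma sum_linear : IsLinearMap ℝ (fun v : Fin d → ℝ => ∑ j, v j) :=
  ⟨fun a b => by simp [Finset.sum_add_distrib],
   fun c x => by simp [Finset.mul_sum, smul_eq_mul]⟩

lemma fD_linear (j : Fin d) (ε : ℝ) :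
    IsLinearMap ℝ (fun v : Fin d → ℝ => v j - ε * ∑ j' ∈ Finset.univ.erase j, v j') := by
  constructor
  · intro a b
    simp only [Pi.add_apply, Finset.sum_add_distrib]
    ring
  · intro c x
    simp only [Pi.smul_apply, smul_eq_mul, ← Finset.mul_sum]
    ring

lemma sum_axPt (j : Fin d) (k : Fin (r-1)) : ∑ j', axPt d r j k j' = ((k : ℕ) + 1 : ℝ) := by
  rw [Finset.sum_eq_single_of_mem j (Finset.mem_univ j)]
  · exact axPt_apply_self j k
  · intro b _ hb; exact axPt_apply_ne j k hb

theorem classify (hd : 1 ≤ d) (hr : 1 ≤ r) {C : Set (Set (Fin d → ℝ))}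
    (h1 : C.ncard = r) (h2 : C.PairwiseDisjoint id) (h3 : ⋃₀ C = Xset d r ι)
    (p : Fin d → ℝ) (hp : ∀ S ∈ C, p ∈ convexHull ℝ S) :
    ∃ g : Gtype d r ι, C = Set.range (part g) := by
  classical
  have hCfin : C.Finite := Set.finite_of_ncard_ne_zero (by omega)
  have hsub : ∀ S ∈ C, S ⊆ Xset d r ι := by
    intro S hS v hv
    rw [← h3]; exact ⟨S, hS, hv⟩
  have huniq : ∀ S ∈ C, ∀ S' ∈ C, ∀ v, v ∈ S → v ∈ S' → S = S' := by
    intro S hS S' hS' v hv hv'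
    by_contra hne
    exact (Set.disjoint_left.1 (h2 hS hS' hne)) hv hv'
  -- Claim A : p has no positive coordinate
  have hA : ∀ j, p j ≤ 0 := by
    intro j
    by_contra hpj
    push_neg at hpj
    have hax : ∀ S ∈ C, ∃ k : Fin (r-1), axPt d r j k ∈ S := by
      intro S hS
      by_contra hno
      push_neg at hno
      have hle : ∀ v ∈ S, v j ≤ 0 := by
        intro v hv
        have := hsub S hS hv
        rw [mem_Xset_iff] at this
        rcases this with ⟨i, rfl⟩ | ⟨j', k, rfl⟩
        · exact xpt_nonpos i j
        · by_cases hj : j' = j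
          · subst hj; exact absurd hv (hno k)
          · rw [axPt_apply_ne _ _ (Ne.symm hj)]
      exact absurd (hull_le (eval_linear j) hle (hp S hS)) (not_le.2 hpj)
    have hCne : C.Nonempty := Set.nonempty_of_ncard_ne_zero (by omega)
    obtain ⟨S0, hS0⟩ := hCne
    obtain ⟨k0, -⟩ := hax S0 hS0
    haveI : Nonempty (Fin (r-1)) := ⟨k0⟩
    choose! F hF using hax
    have hinj : Set.InjOn F C := by
      intro S hS S' hS' he
      by_contra hne
      exact (Set.disjoint_left.1 (h2 hS hS' hne)) (hF S hS) (he ▸ hF S' hS')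
    have hle2 : C.ncard ≤ r - 1 := by
      rw [← Set.ncard_image_of_injOn hinj]
      calc (F '' C).ncard ≤ (Set.univ : Set (Fin (r-1))).ncard :=
            Set.ncard_le_ncard (Set.subset_univ _) Set.finite_univ
        _ = r - 1 := by rw [Set.ncard_univ, Nat.card_eq_fintype_card, Fintype.card_fin]
    omega
  -- Claim B : every part contains some xpt
  have hB : ∀ S ∈ C, ∃ i, xpt d r ι i ∈ S := by
    intro S hS
    by_contra hno
    push_neg at hno
    have hge : ∀ v ∈ S, (1:ℝ) ≤ ∑ j, v j := by
      intro v hv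
      have := hsub S hS hv
      rw [mem_Xset_iff] at this
      rcases this with ⟨i, rfl⟩ | ⟨j', k, rfl⟩
      · exact absurd hv (hno i)
      · rw [sum_axPt]
        have : (0:ℝ) ≤ (k : ℕ) := Nat.cast_nonneg _
        linarith
    have h1' := hull_ge sum_linear hge (hp S hS)
    have h2' : ∑ j, p j ≤ 0 := Finset.sum_nonpos (fun j _ => hA j)
    linarith
  -- the part containing xpt i
  have hxX : ∀ i, ∃ S ∈ C, xpt d r ι i ∈ S := by
    intro i
    have : xpt d r ι i ∈ ⋃₀ C := by
      rw [h3, mem_Xset_iff]; exact Or.inl ⟨i, rfl⟩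
    exact this
  choose Sf hSfC hSfx using hxX
  have hSf_eq : ∀ i, ∀ S ∈ C, xpt d r ι i ∈ S → S = Sf i := by
    intro i S hS hv
    exact huniq S hS (Sf i) (hSfC i) _ hv (hSfx i)
  have hsurj : ∀ S ∈ C, ∃ i, S = Sf i := by
    intro S hS
    obtain ⟨i, hi⟩ := hB S hS
    exact ⟨i, hSf_eq i S hS hi⟩
  haveI := hCfin.fintype
  have hcardC : Fintype.card ↥C = r := by
    rw [← Nat.card_eq_fintype_card, Nat.card_coe_set_eq, h1]
  have hSfinj : Function.Injective Sf := by
    set φ : Fin r → ↥C := fun i => ⟨Sf i, hSfC i⟩ with hφ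
    have hφsurj : Function.Surjective φ := by
      rintro ⟨S, hS⟩
      obtain ⟨i, hi⟩ := hsurj S hS
      exact ⟨i, by simp [hφ, hi]⟩
    have hbij : Function.Bijective φ :=
      (Fintype.bijective_iff_surjective_and_card φ).2 ⟨hφsurj, by rw [hcardC, Fintype.card_fin]⟩
    intro i i' h
    exact hbij.1 (by simp [hφ, h])
  have hxpt_unique : ∀ i i', xpt d r ι i' ∈ Sf i → i' = i := by
    intro i i' h
    have := hSf_eq i' (Sf i) (hSfC i) h
    exact hSfinj this.symm
  -- Claim C : p = 0
  have hp0 : p = 0 := by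
    funext j
    have hge : ∀ v ∈ Sf (ι j), (0:ℝ) ≤ v j := by
      intro v hv
      have := hsub _ (hSfC (ι j)) hv
      rw [mem_Xset_iff] at this
      rcases this with ⟨i', rfl⟩ | ⟨j', k, rfl⟩
      · have : i' = ι j := hxpt_unique _ _ hv
        subst this
        simp [xpt]
      · by_cases hj : j = j'
        · subst hj; rw [axPt_apply_self]; positivity
        · rw [axPt_apply_ne _ _ hj]
    have := hull_ge (eval_linear j) hge (hp _ (hSfC (ι j)))
    have := hA j
    simp only [Pi.zero_apply]
    linarith
  subst hp0
  -- Claim D : part i meets axis j whenever ι j ≠ i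
  have hD : ∀ i : Fin r, ∀ j : Fin d, ι j ≠ i → ∃ k, axPt d r j k ∈ Sf i := by
    intro i j hij
    by_contra hno
    push_neg at hno
    set ε : ℝ := 1 / (2 * (d:ℝ) + 1) with hε
    have hεpos : 0 < ε := by positivity
    have hεd : ε * (d:ℝ) < 1 := by
      rw [hε, div_mul_eq_mul_div, div_lt_one (by positivity)]
      have : (0:ℝ) ≤ (d:ℝ) := Nat.cast_nonneg _
      linarith
    have hneg : ∀ v ∈ Sf i, v j - ε * ∑ j' ∈ Finset.univ.erase j, v j' < 0 := by
      intro v hv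
      have hvX := hsub _ (hSfC i) hv
      rw [mem_Xset_iff] at hvX
      rcases hvX with ⟨i', rfl⟩ | ⟨j', k, rfl⟩
      · have hii : i' = i := hxpt_unique _ _ hv
        rw [hii]
        have hci : (0:ℝ) < ((i:ℕ):ℝ) + 1 := by positivity
        have hxj : xpt d r ι i j = -(((i:ℕ):ℝ)+1) := if_neg hij
        have hterm : ∀ j' ∈ Finset.univ.erase j, -(((i:ℕ):ℝ)+1) ≤ xpt d r ι i j' := by
          intro j' _
          simp only [xpt]
          split
          · linarith
          · exact le_rfl
        have hSlb : ((Finset.univ.erase j).card : ℝ) * (-(((i:ℕ):ℝ)+1)) ≤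
            ∑ j' ∈ Finset.univ.erase j, xpt d r ι i j' := by
          have := Finset.card_nsmul_le_sum (Finset.univ.erase j)
            (fun j' => xpt d r ι i j') _ hterm
          rwa [nsmul_eq_mul] at this
        have hcard : ((Finset.univ.erase j).card : ℝ) ≤ (d : ℝ) := by
          have : (Finset.univ.erase j).card ≤ d := by
            calc (Finset.univ.erase j).card ≤ (Finset.univ : Finset (Fin d)).card :=
                  Finset.card_le_card (Finset.erase_subset _ _)
              _ = d := by rw [Finset.card_univ, Fintype.card_fin]
          exact_mod_cast this
        have hSlb2 : -((d:ℝ) * (((i:ℕ):ℝ)+1)) ≤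
            ∑ j' ∈ Finset.univ.erase j, xpt d r ι i j' := by
          nlinarith [mul_nonneg (sub_nonneg.2 hcard) hci.le]
        rw [hxj]
        have h5 : -(ε * ((d:ℝ) * (((i:ℕ):ℝ)+1))) ≤
            ε * ∑ j' ∈ Finset.univ.erase j, xpt d r ι i j' := by nlinarith
        have h6 : ε * ((d:ℝ) * (((i:ℕ):ℝ)+1)) < ((i:ℕ):ℝ)+1 := by nlinarith
        linarith
      · have hj' : j' ≠ j := by
          intro he; subst he; exact hno k hv
        rw [axPt_apply_ne _ _ (Ne.symm hj')]
        have hsum : ∑ j'' ∈ Finset.univ.erase j, axPt d r j' k j'' = ((k:ℕ)+1 : ℝ) := by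
          rw [Finset.sum_eq_single_of_mem j' (Finset.mem_erase.2 ⟨hj', Finset.mem_univ _⟩)]
          · exact axPt_apply_self j' k
          · intro b _ hb; exact axPt_apply_ne j' k hb
        rw [hsum]
        have : (0:ℝ) ≤ ((k:ℕ):ℝ) := Nat.cast_nonneg _
        nlinarith
    have hfin := hull_lt (fD_linear j ε) hneg (hp _ (hSfC i))
    simp at hfin
  -- assignment of axis points to parts
  have haxX : ∀ (j : Fin d) (k : Fin (r-1)), ∃ i, axPt d r j k ∈ Sf i := by
    intro j k
    have : axPt d r j k ∈ ⋃₀ C := by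
      rw [h3, mem_Xset_iff]; exact Or.inr ⟨j, k, rfl⟩
    obtain ⟨S, hS, hv⟩ := this
    obtain ⟨i, rfl⟩ := hsurj S hS
    exact ⟨i, hv⟩
  choose m hm using haxX
  have hmu : ∀ (j : Fin d) (k : Fin (r-1)) (i : Fin r), axPt d r j k ∈ Sf i → i = m j k := by
    intro j k i h
    apply hSfinj
    exact huniq _ (hSfC i) _ (hSfC (m j k)) _ h (hm j k)
  have hsurj2 : ∀ (j : Fin d) (i : Fin r), i ≠ ι j → ∃ k, m j k = i := by
    intro j i hi
    obtain ⟨k, hk⟩ := hD i j (Ne.symm hi)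
    exact ⟨k, (hmu j k i hk).symm⟩
  -- per-axis counting
  have hne : ∀ (j : Fin d) (k : Fin (r-1)), m j k ≠ ι j := by
    intro j
    have hfsub : Finset.univ.filter (· ≠ ι j) ⊆ Finset.univ.image (m j) := by
      intro i hi
      rw [Finset.mem_filter] at hi
      obtain ⟨k, hk⟩ := hsurj2 j i hi.2
      exact Finset.mem_image.2 ⟨k, Finset.mem_univ _, hk⟩
    have hc1 : (Finset.univ.filter (· ≠ ι j)).card = r - 1 := by
      rw [Finset.filter_ne', Finset.card_erase_of_mem (Finset.mem_univ _),
        Finset.card_univ, Fintype.card_fin]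
    have hc2 : (Finset.univ.image (m j)).card ≤ r - 1 := by
      calc (Finset.univ.image (m j)).card ≤ (Finset.univ : Finset (Fin (r-1))).card :=
            Finset.card_image_le
        _ = r - 1 := by rw [Finset.card_univ, Fintype.card_fin]
    have heq : Finset.univ.filter (· ≠ ι j) = Finset.univ.image (m j) :=
      Finset.eq_of_subset_of_card_le hfsub (by rw [hc1]; exact hc2)
    intro k
    have : m j k ∈ Finset.univ.filter (· ≠ ι j) := by
      rw [heq]
      exact Finset.mem_image.2 ⟨k, Finset.mem_univ _, rfl⟩
    exact (Finset.mem_filter.1 this).2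
  have hminj : ∀ j : Fin d, Function.Injective (m j) := by
    intro j
    have hfsub : Finset.univ.filter (· ≠ ι j) ⊆ Finset.univ.image (m j) := by
      intro i hi
      rw [Finset.mem_filter] at hi
      obtain ⟨k, hk⟩ := hsurj2 j i hi.2
      exact Finset.mem_image.2 ⟨k, Finset.mem_univ _, hk⟩
    have hc1 : (Finset.univ.filter (· ≠ ι j)).card = r - 1 := by
      rw [Finset.filter_ne', Finset.card_erase_of_mem (Finset.mem_univ _),
        Finset.card_univ, Fintype.card_fin]
    have hcard : (Finset.univ.image (m j)).card = (Finset.univ : Finset (Fin (r-1))).card := by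
      have h1' : (Finset.univ.image (m j)).card ≤ (Finset.univ : Finset (Fin (r-1))).card :=
        Finset.card_image_le
      have h2' : r - 1 ≤ (Finset.univ.image (m j)).card := by
        have := Finset.card_le_card hfsub
        omega
      have h3' : (Finset.univ : Finset (Fin (r-1))).card = r - 1 := by
        rw [Finset.card_univ, Fintype.card_fin]
      omega
    have := Finset.card_image_iff.1 hcard
    intro k k' hkk
    exact this (by simp) (by simp) hkk
  -- build the equiv family
  have hbij : ∀ j : Fin d,
      Function.Bijective (fun k : Fin (r-1) => (⟨m j k, hne j k⟩ : {i : Fin r // i ≠ ι j})) := by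
    intro j
    constructor
    · intro k k' h
      exact hminj j (congrArg Subtype.val h)
    · rintro ⟨i, hi⟩
      obtain ⟨k, hk⟩ := hsurj2 j i hi
      exact ⟨k, Subtype.ext hk⟩
  set g : Gtype d r ι := fun j => Equiv.ofBijective _ (hbij j) with hg
  have hgval : ∀ (j : Fin d) (k : Fin (r-1)), ((g j k : {i' : Fin r // i' ≠ ι j}) : Fin r) = m j k :=
    fun j k => rfl
  have hpart : ∀ i, part g i = Sf i := by
    intro i
    apply Set.Subset.antisymm
    · intro v hv
      rw [mem_part_iff] at hv
      rcases hv with rfl | ⟨j, k, hi, rfl⟩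
      · exact hSfx i
      · rw [hgval] at hi
        rw [← hi]
        exact hm j k
    · intro v hv
      have := hsub _ (hSfC i) hv
      rw [mem_Xset_iff] at this
      rw [mem_part_iff]
      rcases this with ⟨i', rfl⟩ | ⟨j, k, rfl⟩
      · exact Or.inl (by rw [hxpt_unique _ _ hv])
      · exact Or.inr ⟨j, k, by rw [hgval, ← hmu j k i hv], rfl⟩
  refine ⟨g, ?_⟩
  apply Set.Subset.antisymm
  · intro S hS
    obtain ⟨i, rfl⟩ := hsurj S hS
    exact ⟨i, (hpart i)⟩
  · rintro S ⟨i, rfl⟩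
    rw [hpart]
    exact hSfC i


end TvbAux

/-- The constructed set `X` has exactly `((r-1)!)^d` Tverberg partitions into `r`
parts, counted as unordered partitions (families of pairwise disjoint sets covering
`X` whose convex hulls share a point). -/
theorem card_tverberg_partitions (d r : ℕ) (hd : 1 ≤ d) (hr : 1 ≤ r)
    (a : Fin r → ℕ) (hpos : ∀ i, 1 ≤ a i) (hle : ∀ i, a i ≤ d + 1)
    (hsum : ∑ i, a i = (d + 1) * (r - 1) + 1)
    (ι : Fin d → Fin r)
    (hι : ∀ i, (Finset.univ.filter fun j => ι j = i).card = d + 1 - a i) :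
    {C : Set (Set (Fin d → ℝ)) |
        C.ncard = r ∧ C.PairwiseDisjoint id ∧ ⋃₀ C = Xset d r ι ∧
        ∃ p : Fin d → ℝ, ∀ S ∈ C, p ∈ convexHull ℝ S}.ncard
      = ((r - 1).factorial) ^ d := by
  classical
  have hset : {C : Set (Set (Fin d → ℝ)) |
        C.ncard = r ∧ C.PairwiseDisjoint id ∧ ⋃₀ C = Xset d r ι ∧
        ∃ p : Fin d → ℝ, ∀ S ∈ C, p ∈ convexHull ℝ S}
      = Set.range (fun g : TvbAux.Gtype d r ι => Set.range (TvbAux.part g)) := by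
    apply Set.Subset.antisymm
    · rintro C ⟨h1, h2, h3, p, hp⟩
      obtain ⟨g, rfl⟩ := TvbAux.classify hd hr h1 h2 h3 p hp
      exact ⟨g, rfl⟩
    · rintro C ⟨g, rfl⟩
      refine ⟨TvbAux.ncard_range_part hd hr g, TvbAux.pairwiseDisjoint_range_part hd g,
        TvbAux.sUnion_part g, 0, ?_⟩
      rintro S ⟨i, rfl⟩
      exact TvbAux.zero_mem_hull g i
  rw [hset, ← Set.image_univ, Set.ncard_image_of_injective _ (TvbAux.Phi_injective hd),
    Set.ncard_univ, TvbAux.card_Gtype hr]
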